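/- For every x > 0 one has m(x) < x − 1/3 + 1/(18x). -/

import Mathlib

open MeasureTheory Filter Set Topology


noncomputable def gmf (x t : ℝ) : ℝ := Real.exp (-t) * t ^ (x - 1)
noncomputable def gmv (x y : ℝ) : ℝ := 3 * y ^ 2 * gmf x (y ^ 3)
noncomputable def gmF (x r : ℝ) : ℝ := ∫ y in (0:ℝ)..r, gmv x y
noncomputable def gmphi (x μ s : ℝ) : ℝ := gmF x (μ + s) + gmF x (μ - s)
noncomputable def gmchi (x μ s : ℝ) : ℝ :=
  (3*x-1) * (Real.log (μ+s) - Real.log (μ-s)) - ((μ+s)^3 - (μ-s)^3)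
noncomputable def gmchid (x μ s : ℝ) : ℝ :=
  (3*x-1) * ((μ+s)⁻¹ + (μ-s)⁻¹) - (3*(μ+s)^2 + 3*(μ-s)^2)

lemma gmf_pos {x t : ℝ} (ht : 0 < t) : 0 < gmf x t :=
  mul_pos (Real.exp_pos _) (Real.rpow_pos_of_pos ht _)

lemma gmv_pos {x y : ℝ} (hy : 0 < y) : 0 < gmv x y :=
  mul_pos (by positivity) (gmf_pos (by positivity))

lemma gmf_nonneg {x t : ℝ} (ht : 0 ≤ t) : 0 ≤ gmf x t := by
  unfold gmf
  positivity

lemma gmv_nonneg {x y : ℝ} (hy : 0 ≤ y) : 0 ≤ gmv x y := by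
  have : (0:ℝ) ≤ y ^ 3 := by positivity
  exact mul_nonneg (by positivity) (gmf_nonneg this)

lemma continuousOn_gmf (x : ℝ) : ContinuousOn (gmf x) (Ioi 0) := by
  apply ContinuousOn.mul
  · exact (continuous_neg.rexp).continuousOn
  · exact fun t ht => (Real.continuousAt_rpow_const t _ (Or.inl (ne_of_gt ht))).continuousWithinAt

lemma continuousOn_gmv (x : ℝ) : ContinuousOn (gmv x) (Ioi 0) := by
  apply ContinuousOn.mul
  · fun_prop
  · exact (continuousOn_gmf x).comp (by fun_prop) (fun y hy => by
      simp only [mem_Ioi] at *; positivity)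

lemma continuousAt_gmv {x y : ℝ} (hy : 0 < y) : ContinuousAt (gmv x) y :=
  (continuousOn_gmv x).continuousAt (Ioi_mem_nhds hy)

lemma cube_deriv : ∀ y ∈ (Ioi (0:ℝ)), HasDerivWithinAt (fun y : ℝ => y ^ 3) (3 * y ^ 2) (Ioi 0) y := by
  intro y _
  simpa using (hasDerivAt_pow 3 y).hasDerivWithinAt

lemma cube_injOn : InjOn (fun y : ℝ => y ^ 3) (Ioi 0) := by
  intro a ha b hb h
  simp only [mem_Ioi] at *
  nlinarith [sq_nonneg (a - b), sq_nonneg (a + b), mul_pos ha hb]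

lemma cube_image_Ioi : (fun y : ℝ => y ^ 3) '' (Ioi 0) = Ioi 0 := by
  ext t
  constructor
  · rintro ⟨y, hy, rfl⟩; simp only [mem_Ioi] at *; positivity
  · intro ht
    exact ⟨t ^ ((1:ℝ)/3), by simp only [mem_Ioi] at *; positivity, by
      have : (t ^ ((1:ℝ)/3)) ^ (3:ℕ) = t := by
        rw [← Real.rpow_natCast (t ^ ((1:ℝ)/3)) 3, ← Real.rpow_mul (le_of_lt ht)]
        norm_num
      simpa using this⟩

/-- substitution: integral of g over Ioi 0 equals integral of 3y² g(y³). -/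
lemma integral_cube_subst (g : ℝ → ℝ) :
    ∫ t in Ioi (0:ℝ), g t = ∫ y in Ioi (0:ℝ), 3 * y ^ 2 * g (y ^ 3) := by
  have h := integral_image_eq_integral_abs_deriv_smul measurableSet_Ioi cube_deriv cube_injOn g
  rw [cube_image_Ioi] at h
  rw [h]
  refine setIntegral_congr_fun measurableSet_Ioi (fun y hy => ?_)
  simp only [mem_Ioi] at hy
  rw [smul_eq_mul, abs_of_nonneg (by positivity)]

lemma integrableOn_cube_subst {g : ℝ → ℝ} (hg : IntegrableOn g (Ioi 0)) :
    IntegrableOn (fun y => 3 * y ^ 2 * g (y ^ 3)) (Ioi (0:ℝ)) := by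
  have := (integrableOn_image_iff_integrableOn_abs_deriv_smul measurableSet_Ioi cube_deriv cube_injOn g).mp
    (by rwa [cube_image_Ioi])
  refine this.congr_fun (fun y hy => ?_) measurableSet_Ioi
  simp only [mem_Ioi] at hy
  dsimp only
  rw [smul_eq_mul, abs_of_nonneg (by positivity)]
lemma gmf_int {x : ℝ} (hx : 0 < x) : IntegrableOn (gmf x) (Ioi 0) :=
  Real.GammaIntegral_convergent hx

lemma gmf_integral {x : ℝ} (hx : 0 < x) : ∫ t in Ioi (0:ℝ), gmf x t = Real.Gamma x :=
  (Real.Gamma_eq_integral hx).symm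

/-- the "cube-root moment" integrand equals the Gamma(x+1/3) integrand on `Ioi 0`. -/
lemma moment_congr {x : ℝ} :
    ∀ t ∈ Ioi (0:ℝ), t ^ ((1:ℝ)/3) * gmf x t = gmf (x + 1/3) t := by
  intro t ht
  simp only [mem_Ioi] at ht
  unfold gmf
  rw [show x + 1/3 - 1 = (x - 1) + 1/3 by ring, Real.rpow_add ht]
  ring

lemma moment_int {x : ℝ} (hx : 0 < x) :
    IntegrableOn (fun t => t ^ ((1:ℝ)/3) * gmf x t) (Ioi 0) :=
  (gmf_int (by linarith : (0:ℝ) < x + 1/3)).congr_fun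
    (fun t ht => (moment_congr t ht).symm) measurableSet_Ioi

lemma moment_integral {x : ℝ} (hx : 0 < x) :
    ∫ t in Ioi (0:ℝ), t ^ ((1:ℝ)/3) * gmf x t = Real.Gamma (x + 1/3) := by
  rw [setIntegral_congr_fun measurableSet_Ioi moment_congr]
  exact gmf_integral (by linarith)

lemma cube_rpow_third {y : ℝ} (hy : 0 < y) : (y ^ 3) ^ ((1:ℝ)/3) = y := by
  rw [← Real.rpow_natCast y 3, ← Real.rpow_mul hy.le]
  norm_num

lemma gmv_integral {x : ℝ} (hx : 0 < x) : ∫ y in Ioi (0:ℝ), gmv x y = Real.Gamma x := by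
  rw [← gmf_integral hx, integral_cube_subst (gmf x)]
  rfl

lemma gmv_int {x : ℝ} (hx : 0 < x) : IntegrableOn (gmv x) (Ioi 0) :=
  integrableOn_cube_subst (gmf_int hx)

lemma gmv_moment_integral {x : ℝ} (hx : 0 < x) :
    ∫ y in Ioi (0:ℝ), y * gmv x y = Real.Gamma (x + 1/3) := by
  rw [← moment_integral hx,
    integral_cube_subst (fun t => t ^ ((1:ℝ)/3) * gmf x t)]
  refine setIntegral_congr_fun measurableSet_Ioi (fun y hy => ?_)
  simp only [mem_Ioi] at hy
  rw [cube_rpow_third hy]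
  unfold gmv; ring

lemma gmv_moment_int {x : ℝ} (hx : 0 < x) :
    IntegrableOn (fun y => y * gmv x y) (Ioi (0:ℝ)) := by
  have := integrableOn_cube_subst (moment_int hx)
  refine this.congr_fun (fun y hy => ?_) measurableSet_Ioi
  simp only [mem_Ioi] at hy
  dsimp only
  rw [cube_rpow_third hy]
  unfold gmv; ring

/-- image substitution on a bounded piece: `∫_{Ioc 0 (μ^3)} f = ∫_{Ioc 0 μ} v`. -/
lemma Ioc_cube_subst (x : ℝ) {μ : ℝ} (hμ : 0 < μ) :
    ∫ t in Ioc (0:ℝ) (μ ^ 3), gmf x t = ∫ y in Ioc (0:ℝ) μ, gmv x y := by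
  have hd : ∀ y ∈ Ioc (0:ℝ) μ, HasDerivWithinAt (fun y : ℝ => y ^ 3) (3 * y ^ 2) (Ioc 0 μ) y := by
    intro y _
    simpa using (hasDerivAt_pow 3 y).hasDerivWithinAt
  have hinj : InjOn (fun y : ℝ => y ^ 3) (Ioc 0 μ) := by
    intro a ha b hb h
    simp only [mem_Ioc] at *
    nlinarith [sq_nonneg (a - b), sq_nonneg (a + b), mul_pos ha.1 hb.1]
  have himg : (fun y : ℝ => y ^ 3) '' (Ioc 0 μ) = Ioc 0 (μ ^ 3) := by
    ext t
    simp only [mem_image, mem_Ioc]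
    constructor
    · rintro ⟨y, ⟨hy0, hyμ⟩, rfl⟩
      exact ⟨by positivity, by nlinarith [pow_le_pow_left₀ hy0.le hyμ 3]⟩
    · rintro ⟨ht0, htμ⟩
      refine ⟨t ^ ((1:ℝ)/3), ⟨by positivity, ?_⟩, ?_⟩
      · calc t ^ ((1:ℝ)/3) ≤ (μ ^ 3) ^ ((1:ℝ)/3) :=
            Real.rpow_le_rpow ht0.le htμ (by norm_num)
          _ = μ := by
            rw [← Real.rpow_natCast μ 3, ← Real.rpow_mul hμ.le]; norm_num
      · rw [← Real.rpow_natCast (t ^ ((1:ℝ)/3)) 3, ← Real.rpow_mul ht0.le]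
        norm_num
  have h := integral_image_eq_integral_abs_deriv_smul measurableSet_Ioc hd hinj (gmf x)
  rw [himg] at h
  rw [h]
  refine setIntegral_congr_fun measurableSet_Ioc (fun y hy => ?_)
  simp only [mem_Ioc] at hy
  rw [smul_eq_mul, abs_of_nonneg (by positivity)]
  rfl

lemma gmv_ii {x a b : ℝ} (hx : 0 < x) (ha : 0 ≤ a) (hb : 0 ≤ b) :
    IntervalIntegrable (gmv x) volume a b := by
  wlog hab : a ≤ b generalizing a b
  · exact (this hb ha (le_of_not_ge hab)).symm
  rw [intervalIntegrable_iff_integrableOn_Ioc_of_le hab]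
  exact (gmv_int hx).mono_set (fun t ht => lt_of_le_of_lt ha ht.1)

lemma gmF_Ioc {x r : ℝ} (hr : 0 ≤ r) : gmF x r = ∫ y in Ioc (0:ℝ) r, gmv x y :=
  intervalIntegral.integral_of_le hr

lemma gmF_contOn {x B : ℝ} (hx : 0 < x) : ContinuousOn (gmF x) (Icc 0 B) := by
  have h : IntegrableOn (gmv x) (Icc 0 B) := by
    rw [integrableOn_Icc_iff_integrableOn_Ioc]
    exact (gmv_int hx).mono_set (fun t ht => ht.1)
  exact (intervalIntegral.continuousOn_primitive h).congr
    (fun r hr => gmF_Ioc hr.1)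

lemma gmF_hasDeriv {x r : ℝ} (hx : 0 < x) (hr : 0 < r) : HasDerivAt (gmF x) (gmv x r) r := by
  refine intervalIntegral.integral_hasDerivAt_right (gmv_ii hx le_rfl hr.le) ?_ (continuousAt_gmv hr)
  exact (continuousOn_gmv x).stronglyMeasurableAtFilter isOpen_Ioi r hr

lemma gmF_le_Gamma {x r : ℝ} (hx : 0 < x) (hr : 0 ≤ r) : gmF x r ≤ Real.Gamma x := by
  rw [gmF_Ioc hr, ← gmv_integral hx]
  apply setIntegral_mono_set (gmv_int hx)
  · filter_upwards [ae_restrict_mem measurableSet_Ioi] with y hy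
    exact gmv_nonneg (le_of_lt hy)
  · exact HasSubset.Subset.eventuallyLE (fun t ht => ht.1)

lemma gmF_zero {x : ℝ} : gmF x 0 = 0 := by simp [gmF]

lemma gmphi_hasDeriv {x μ s : ℝ} (hx : 0 < x) (hs : -μ < s) (hs' : s < μ) :
    HasDerivAt (gmphi x μ) (gmv x (μ + s) - gmv x (μ - s)) s := by
  have h1 : HasDerivAt (fun s : ℝ => μ + s) 1 s := by
    simpa using (hasDerivAt_id s).const_add μ
  have h2 : HasDerivAt (fun s : ℝ => μ - s) (-1) s := by
    simpa using (hasDerivAt_id s).const_sub μ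
  have d1 := (gmF_hasDeriv hx (by linarith : (0:ℝ) < μ + s)).comp s h1
  have d2 := (gmF_hasDeriv hx (by linarith : (0:ℝ) < μ - s)).comp s h2
  have d1' : HasDerivAt (fun s : ℝ => gmF x (μ + s)) (gmv x (μ + s)) s := by
    simpa [Function.comp_def] using d1
  have d2' : HasDerivAt (fun s : ℝ => gmF x (μ - s)) (-gmv x (μ - s)) s := by
    have : gmv x (μ - s) * (-1) = -gmv x (μ - s) := by ring
    rw [← this]
    simpa [Function.comp_def] using d2
  have := d1'.add d2'
  rw [show gmv x (μ + s) + -gmv x (μ - s) = gmv x (μ + s) - gmv x (μ - s) by ring] at this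
  exact this

lemma gmchi_hasDeriv {x μ s : ℝ} (hs : -μ < s) (hs' : s < μ) :
    HasDerivAt (gmchi x μ) (gmchid x μ s) s := by
  have h1 : HasDerivAt (fun s : ℝ => μ + s) 1 s := by
    simpa using (hasDerivAt_id s).const_add μ
  have h2 : HasDerivAt (fun s : ℝ => μ - s) (-1) s := by
    simpa using (hasDerivAt_id s).const_sub μ
  have l1 : HasDerivAt (fun s : ℝ => Real.log (μ + s)) (1/(μ+s)) s := by
    simpa using h1.log (by linarith : μ + s ≠ 0)
  have l2 : HasDerivAt (fun s : ℝ => Real.log (μ - s)) (-1/(μ-s)) s :=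
    h2.log (sub_ne_zero_of_ne (by linarith))
  have p1 : HasDerivAt (fun s : ℝ => (μ + s)^3) (3*(μ+s)^2 * 1) s := by
    exact_mod_cast h1.pow 3
  have p2 : HasDerivAt (fun s : ℝ => (μ - s)^3) (3*(μ-s)^2 * (-1)) s := by
    exact_mod_cast h2.pow 3
  have := (((l1.sub l2).const_mul (3*x-1)).sub (p1.sub p2))
  refine this.congr_deriv ?_
  unfold gmchid
  ring

lemma log_gmv {x y : ℝ} (hy : 0 < y) :
    Real.log (gmv x y) = Real.log 3 + (3*x-1) * Real.log y - y^3 := by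
  unfold gmv gmf
  have h3 : (0:ℝ) < y^3 := by positivity
  rw [Real.log_mul (by positivity) (by positivity),
    Real.log_mul (by norm_num) (by positivity),
    Real.log_mul (Real.exp_ne_zero _) (by positivity),
    Real.log_exp, Real.log_rpow h3, Real.log_pow, Real.log_pow]
  push_cast
  ring

lemma gmchi_eq_log_sub {x μ s : ℝ} (hs0 : -μ < s) (hs : s < μ) :
    gmchi x μ s = Real.log (gmv x (μ+s)) - Real.log (gmv x (μ-s)) := by
  rw [log_gmv (by linarith : (0:ℝ) < μ + s), log_gmv (by linarith : (0:ℝ) < μ - s)]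
  unfold gmchi
  ring

lemma gmv_le_of_chi_nonneg {x μ s : ℝ} (hs0 : -μ < s) (hs : s < μ) (h : 0 ≤ gmchi x μ s) :
    gmv x (μ - s) ≤ gmv x (μ + s) := by
  rw [gmchi_eq_log_sub hs0 hs] at h
  exact (Real.log_le_log_iff (gmv_pos (by linarith : (0:ℝ) < μ - s))
    (gmv_pos (by linarith : (0:ℝ) < μ + s))).mp (by linarith)

lemma gmv_le_of_chi_nonpos {x μ s : ℝ} (hs0 : -μ < s) (hs : s < μ) (h : gmchi x μ s ≤ 0) :
    gmv x (μ + s) ≤ gmv x (μ - s) := by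
  rw [gmchi_eq_log_sub hs0 hs] at h
  exact (Real.log_le_log_iff (gmv_pos (by linarith : (0:ℝ) < μ + s))
    (gmv_pos (by linarith : (0:ℝ) < μ - s))).mp (by linarith)

lemma gmchid_iff {x μ s : ℝ} (h0 : 0 < s) (hs : s < μ) :
    0 ≤ gmchid x μ s ↔ 6*(μ^4 - s^4) ≤ (3*x-1)*(2*μ) := by
  have hps : (0:ℝ) < μ + s := by linarith
  have hms : (0:ℝ) < μ - s := by linarith
  have hden : (0:ℝ) < (μ+s)*(μ-s) := mul_pos hps hms
  have key : gmchid x μ s = ((3*x-1)*(2*μ) - 6*(μ^4 - s^4))/((μ+s)*(μ-s)) := by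
    unfold gmchid
    field_simp
    ring
  rw [key]
  constructor
  · intro h
    have := mul_le_mul_of_nonneg_right h hden.le
    rw [zero_mul, div_mul_cancel₀ _ hden.ne'] at this
    linarith
  · intro h
    exact div_nonneg (by linarith) hden.le

lemma gmchid_persist {x μ p r : ℝ} (hp : 0 < p) (hpr : p ≤ r) (hr : r < μ)
    (h : 0 ≤ gmchid x μ p) : 0 ≤ gmchid x μ r := by
  rw [gmchid_iff hp (lt_of_le_of_lt hpr hr)] at h
  rw [gmchid_iff (lt_of_lt_of_le hp hpr) hr]
  nlinarith [pow_le_pow_left₀ hp.le hpr 4]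

lemma gmchi_zero {x μ : ℝ} : gmchi x μ 0 = 0 := by simp [gmchi]

lemma gmchi_contOn {x μ a b : ℝ} (ha : -μ < a) (hb : b < μ) :
    ContinuousOn (gmchi x μ) (Icc a b) := by
  intro s hs
  exact ((gmchi_hasDeriv (x := x) (by linarith [hs.1] : -μ < s)
    (by linarith [hs.2])).continuousAt).continuousWithinAt

/-- once `χ` is nonnegative somewhere in `(0, μ)` it stays nonnegative up to `μ`. -/
lemma gmchi_propagate {x μ q t : ℝ} (hq : 0 < q) (hqμ : q < μ) (hchi : 0 ≤ gmchi x μ q)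
    (hqt : q ≤ t) (ht : t < μ) : 0 ≤ gmchi x μ t := by
  obtain ⟨p, hp, hpd⟩ := exists_hasDerivAt_eq_slope (gmchi x μ) (gmchid x μ) hq
    (gmchi_contOn (by linarith) (by linarith))
    (fun r hr => gmchi_hasDeriv (by linarith [hr.1]) (by linarith [hr.2]))
  have hslope : 0 ≤ gmchid x μ p := by
    rw [hpd, gmchi_zero]
    have : 0 ≤ gmchi x μ q / (q - 0) := div_nonneg hchi (by linarith)
    simpa using this
  have hmono : MonotoneOn (gmchi x μ) (Icc q t) := by
    apply monotoneOn_of_deriv_nonneg (convex_Icc q t)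
      (gmchi_contOn (by linarith) (by linarith))
    · intro r hr
      rw [interior_Icc] at hr
      exact (gmchi_hasDeriv (by linarith [hr.1] : -μ < r)
        (by linarith [hr.2])).differentiableAt.differentiableWithinAt
    · intro r hr
      rw [interior_Icc] at hr
      rw [(gmchi_hasDeriv (by linarith [hr.1] : -μ < r) (by linarith [hr.2])).deriv]
      exact gmchid_persist hp.1 (by linarith [hp.2, hr.1]) (by linarith [hr.2]) hslope
  calc (0:ℝ) ≤ gmchi x μ q := hchi
    _ ≤ gmchi x μ t := hmono (by constructor <;> linarith) (by constructor <;> linarith) hqt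

/-- Quasiconvexity: φ is bounded by `Γ x` on `[0, μ]`, given the median property. -/
lemma gmphi_le {x μ : ℝ} (hx : 0 < x) (hμ : 0 < μ)
    (hmed : gmF x μ = Real.Gamma x / 2) :
    ∀ s ∈ Icc (0:ℝ) μ, gmphi x μ s ≤ Real.Gamma x := by
  have hphi0 : gmphi x μ 0 = Real.Gamma x := by
    unfold gmphi
    rw [add_zero, sub_zero, hmed]
    ring
  have hphiμ : gmphi x μ μ ≤ Real.Gamma x := by
    unfold gmphi
    rw [sub_self, gmF_zero, add_zero]
    exact gmF_le_Gamma hx (by linarith)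
  intro s hs
  rcases eq_or_lt_of_le hs.1 with h0 | h0
  · rw [← h0]; rw [hphi0]
  rcases eq_or_lt_of_le hs.2 with h1 | h1
  · rw [h1]; exact hphiμ
  -- now s ∈ (0, μ)
  by_cases hcase : ∃ t, t ∈ Ico s μ ∧ gmchi x μ t < 0
  · -- χ < 0 on (0, s], φ antitone on [0, s]
    obtain ⟨t₀, ht₀, ht₀neg⟩ := hcase
    have hneg : ∀ q, 0 < q → q ≤ s → gmchi x μ q < 0 := by
      intro q hq hqs
      by_contra hcon
      push_neg at hcon
      have := gmchi_propagate hq (by linarith [ht₀.2]) hcon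
        (le_trans hqs ht₀.1) (ht₀.2)
      linarith
    have hanti : AntitoneOn (gmphi x μ) (Icc 0 s) := by
      apply antitoneOn_of_deriv_nonpos (convex_Icc 0 s)
      · intro r hr
        exact (gmphi_hasDeriv hx (by linarith [hr.1] : -μ < r)
          (by linarith [hr.2])).continuousAt.continuousWithinAt
      · intro r hr
        rw [interior_Icc] at hr
        exact (gmphi_hasDeriv hx (by linarith [hr.1] : -μ < r)
          (by linarith [hr.2])).differentiableAt.differentiableWithinAt
      · intro r hr
        rw [interior_Icc] at hr
        rw [(gmphi_hasDeriv hx (by linarith [hr.1] : -μ < r) (by linarith [hr.2])).deriv]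
        have := gmv_le_of_chi_nonpos (x := x) (by linarith [hr.1] : -μ < r)
          (by linarith [hr.2]) (le_of_lt (hneg r hr.1 hr.2.le))
        linarith
    calc gmphi x μ s ≤ gmphi x μ 0 :=
          hanti (by constructor <;> linarith) (by constructor <;> linarith) hs.1
      _ = Real.Gamma x := hphi0
  · -- χ ≥ 0 on [s, μ), φ monotone on [s, μ]
    push_neg at hcase
    have hmono : MonotoneOn (gmphi x μ) (Icc s μ) := by
      apply monotoneOn_of_deriv_nonneg (convex_Icc s μ)
      · -- continuity on [s, μ] : via gmF continuity on [0, 2μ]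
        have hc : ContinuousOn (gmF x) (Icc 0 (2*μ)) := gmF_contOn hx
        apply ContinuousOn.add
        · apply hc.comp (by fun_prop)
          intro r hr
          exact ⟨by linarith [hr.1], by linarith [hr.2]⟩
        · apply hc.comp (by fun_prop)
          intro r hr
          exact ⟨by linarith [hr.2], by linarith [hr.1]⟩
      · intro r hr
        rw [interior_Icc] at hr
        exact (gmphi_hasDeriv hx (by linarith [hr.1] : -μ < r)
          (by linarith [hr.2])).differentiableAt.differentiableWithinAt
      · intro r hr
        rw [interior_Icc] at hr
        rw [(gmphi_hasDeriv hx (by linarith [hr.1] : -μ < r) (by linarith [hr.2])).deriv]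
        have := gmv_le_of_chi_nonneg (x := x) (by linarith [hr.1] : -μ < r)
          (by linarith [hr.2]) (hcase r ⟨hr.1.le, hr.2⟩)
        linarith
    calc gmphi x μ s ≤ gmphi x μ μ :=
          hmono (by constructor <;> linarith) (by constructor <;> linarith) hs.2
      _ ≤ Real.Gamma x := hphiμ

section stage4
variable {x μ : ℝ}

lemma gmphi_contOn (hx : 0 < x) (hμ : 0 < μ) : ContinuousOn (gmphi x μ) (Icc 0 μ) := by
  have hc : ContinuousOn (gmF x) (Icc 0 (2*μ)) := gmF_contOn hx
  apply ContinuousOn.add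
  · apply hc.comp (by fun_prop)
    intro r hr
    exact ⟨by linarith [hr.1], by linarith [hr.2]⟩
  · apply hc.comp (by fun_prop)
    intro r hr
    exact ⟨by linarith [hr.2], by linarith [hr.1]⟩

lemma ii_vminus (hx : 0 < x) (hμ : 0 < μ) :
    IntervalIntegrable (fun s => gmv x (μ - s)) volume 0 μ := by
  have := (gmv_ii hx (le_refl (0:ℝ)) hμ.le).comp_sub_left μ
  simpa using this.symm

lemma ii_vplus (hx : 0 < x) (hμ : 0 < μ) {b : ℝ} (hb : 0 ≤ b) :
    IntervalIntegrable (fun s => gmv x (μ + s)) volume 0 b := by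
  apply ContinuousOn.intervalIntegrable
  intro s hs
  rw [uIcc_of_le hb] at hs
  have : ContinuousAt (fun s : ℝ => gmv x (μ + s)) s :=
    (continuousAt_gmv (by linarith [hs.1] : (0:ℝ) < μ + s)).comp (by fun_prop)
  exact this.continuousWithinAt

lemma ii_sD (hx : 0 < x) (hμ : 0 < μ) :
    IntervalIntegrable (fun s => s * (gmv x (μ + s) - gmv x (μ - s))) volume 0 μ := by
  exact IntervalIntegrable.continuousOn_mul
    ((ii_vplus hx hμ hμ.le).sub (ii_vminus hx hμ)) (by fun_prop)

lemma ii_D (hx : 0 < x) (hμ : 0 < μ) {b : ℝ} (hb : 0 ≤ b) (hbμ : b < μ) :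
    IntervalIntegrable (fun s => gmv x (μ + s) - gmv x (μ - s)) volume 0 b := by
  apply ContinuousOn.intervalIntegrable
  intro s hs
  rw [uIcc_of_le hb] at hs
  have h1 : ContinuousAt (fun s : ℝ => gmv x (μ + s)) s :=
    (continuousAt_gmv (by linarith [hs.1] : (0:ℝ) < μ + s)).comp (by fun_prop)
  have h2 : ContinuousAt (fun s : ℝ => gmv x (μ - s)) s :=
    (continuousAt_gmv (by linarith [hs.2, hbμ] : (0:ℝ) < μ - s)).comp (by fun_prop)
  exact (h1.sub h2).continuousWithinAt

/-- IBP identity on `[0, b]` for `b < μ`. -/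
lemma ibp_identity (hx : 0 < x) (hμ : 0 < μ) {b : ℝ} (hb : 0 ≤ b) (hbμ : b < μ) :
    ∫ s in (0:ℝ)..b, s * (gmv x (μ + s) - gmv x (μ - s))
      = b * gmphi x μ b - ∫ s in (0:ℝ)..b, gmphi x μ s := by
  have h := intervalIntegral.integral_mul_deriv_eq_deriv_mul
    (u := fun s : ℝ => s) (u' := fun _ => (1:ℝ))
    (v := gmphi x μ) (v' := fun s => gmv x (μ + s) - gmv x (μ - s))
    (fun s _ => hasDerivAt_id s)
    (fun s hs => by
      rw [uIcc_of_le hb] at hs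
      exact gmphi_hasDeriv hx (by linarith [hs.1]) (by linarith [hs.2]))
    intervalIntegrable_const
    (ii_D hx hμ hb hbμ)
  rw [h]
  simp
end stage4

section stage4b
variable {x μ : ℝ}

/-- key bound after IBP and the φ ≤ Γ estimate, for b < μ -/
lemma ibp_bound (hx : 0 < x) (hμ : 0 < μ) (hmed : gmF x μ = Real.Gamma x / 2)
    {b : ℝ} (hb : 0 ≤ b) (hbμ : b < μ) :
    b * gmphi x μ b - b * Real.Gamma x ≤
      ∫ s in (0:ℝ)..b, s * (gmv x (μ + s) - gmv x (μ - s)) := by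
  rw [ibp_identity hx hμ hb hbμ]
  have hphi_ii : IntervalIntegrable (gmphi x μ) volume 0 b := by
    apply ContinuousOn.intervalIntegrable
    apply (gmphi_contOn hx hμ).mono
    rw [uIcc_of_le hb]
    exact Icc_subset_Icc le_rfl hbμ.le
  have hint : ∫ s in (0:ℝ)..b, gmphi x μ s ≤ ∫ s in (0:ℝ)..b, Real.Gamma x := by
    apply intervalIntegral.integral_mono_on hb hphi_ii intervalIntegrable_const
    intro s hs
    exact gmphi_le hx hμ hmed s ⟨hs.1, by linarith [hs.2]⟩
  simp only [intervalIntegral.integral_const, smul_eq_mul, sub_zero] at hint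
  linarith

/-- limiting version at b = μ. -/
lemma ibp_bound_limit (hx : 0 < x) (hμ : 0 < μ) (hmed : gmF x μ = Real.Gamma x / 2) :
    μ * gmphi x μ μ - μ * Real.Gamma x ≤
      ∫ s in (0:ℝ)..μ, s * (gmv x (μ + s) - gmv x (μ - s)) := by
  set A : ℝ → ℝ := fun r => ∫ s in (0:ℝ)..r, s * (gmv x (μ + s) - gmv x (μ - s)) with hA
  have hIcc : IntegrableOn (fun s => s * (gmv x (μ + s) - gmv x (μ - s))) (Icc 0 μ) := by
    rw [integrableOn_Icc_iff_integrableOn_Ioc]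
    exact (intervalIntegrable_iff_integrableOn_Ioc_of_le hμ.le).mp (ii_sD hx hμ)
  have hAcont : ContinuousOn A (Icc 0 μ) := by
    apply (intervalIntegral.continuousOn_primitive hIcc).congr
    intro r hr
    exact intervalIntegral.integral_of_le hr.1
  have hL : Filter.Tendsto A (𝓝[Ioo 0 μ] μ) (𝓝 (A μ)) := by
    have := (hAcont μ ⟨hμ.le, le_refl μ⟩).tendsto
    exact this.mono_left (nhdsWithin_mono μ Ioo_subset_Icc_self)
  have hR : Filter.Tendsto (fun b => b * gmphi x μ b - b * Real.Gamma x)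
      (𝓝[Ioo 0 μ] μ) (𝓝 (μ * gmphi x μ μ - μ * Real.Gamma x)) := by
    have h1 : ContinuousOn (fun b => b * gmphi x μ b - b * Real.Gamma x) (Icc 0 μ) := by
      apply ContinuousOn.sub
      · exact (continuousOn_id).mul (gmphi_contOn hx hμ)
      · exact (continuousOn_id).mul continuousOn_const
    exact ((h1 μ ⟨hμ.le, le_refl μ⟩).tendsto).mono_left
      (nhdsWithin_mono μ Ioo_subset_Icc_self)
  haveI hne : (𝓝[Ioo 0 μ] μ).NeBot := right_nhdsWithin_Ioo_neBot hμ
  refine le_of_tendsto_of_tendsto hR hL ?_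
  filter_upwards [self_mem_nhdsWithin] with b hb
  exact ibp_bound hx hμ hmed hb.1.le hb.2

/-- the paired integral equals `∫ (y-μ) v` over `(0, 2μ)`. -/
lemma pairing (hx : 0 < x) (hμ : 0 < μ) :
    ∫ s in (0:ℝ)..μ, s * (gmv x (μ + s) - gmv x (μ - s))
      = ∫ y in (0:ℝ)..(2*μ), (y - μ) * gmv x y := by
  have h1 : ∫ s in (0:ℝ)..μ, s * (gmv x (μ + s) - gmv x (μ - s))
      = (∫ s in (0:ℝ)..μ, s * gmv x (μ + s)) - ∫ s in (0:ℝ)..μ, s * gmv x (μ - s) := by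
    rw [← intervalIntegral.integral_sub]
    · congr 1; ext s; ring
    · exact IntervalIntegrable.continuousOn_mul (ii_vplus hx hμ hμ.le) (by fun_prop)
    · exact IntervalIntegrable.continuousOn_mul (ii_vminus hx hμ) (by fun_prop)
  have h2 : ∫ s in (0:ℝ)..μ, s * gmv x (μ + s)
      = ∫ y in μ..(2*μ), (y - μ) * gmv x y := by
    have := intervalIntegral.integral_comp_add_left (a := (0:ℝ)) (b := μ)
      (fun y => (y - μ) * gmv x y) μ
    simp only [add_zero] at this
    rw [show μ + μ = 2*μ by ring] at this
    rw [← this]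
    congr 1; ext s
    simp [add_sub_cancel_left]
  have h3 : ∫ s in (0:ℝ)..μ, s * gmv x (μ - s)
      = ∫ y in (0:ℝ)..μ, (μ - y) * gmv x y := by
    have := intervalIntegral.integral_comp_sub_left (a := (0:ℝ)) (b := μ)
      (fun y => (μ - y) * gmv x y) μ
    simp only [sub_zero, sub_self] at this
    rw [← this]
    congr 1; ext s
    simp [sub_sub_cancel]
  rw [h1, h2, h3]
  have h4 : ∫ y in (0:ℝ)..μ, (μ - y) * gmv x y = - ∫ y in (0:ℝ)..μ, (y - μ) * gmv x y := by
    rw [← intervalIntegral.integral_neg]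
    congr 1; ext y; ring
  rw [h4, sub_neg_eq_add]
  rw [add_comm]
  apply intervalIntegral.integral_add_adjacent_intervals
  · exact IntervalIntegrable.continuousOn_mul (gmv_ii hx le_rfl hμ.le) (by fun_prop)
  · apply IntervalIntegrable.continuousOn_mul _ (by fun_prop)
    exact gmv_ii hx hμ.le (by linarith)

end stage4b

section stage4c
variable {x μ : ℝ}

lemma lin_int (hx : 0 < x) (hμ : 0 < μ) {c : ℝ} :
    IntegrableOn (fun y => (y - c) * gmv x y) (Ioi (0:ℝ)) := by
  have h : IntegrableOn (fun y => y * gmv x y - c * gmv x y) (Ioi (0:ℝ)) :=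
    (gmv_moment_int hx).sub ((gmv_int hx).const_mul c)
  exact h.congr_fun (fun y _ => by ring) measurableSet_Ioi

lemma tail_v_eq (hx : 0 < x) (hμ : 0 < μ) :
    ∫ y in Ioi (2*μ), gmv x y = Real.Gamma x - gmF x (2*μ) := by
  have hsplit : Ioc (0:ℝ) (2*μ) ∪ Ioi (2*μ) = Ioi 0 := Ioc_union_Ioi_eq_Ioi (by linarith)
  have hdisj : Disjoint (Ioc (0:ℝ) (2*μ)) (Ioi (2*μ)) := by
    rw [Set.disjoint_left]
    intro y hy hy'
    exact absurd hy' (not_lt.mpr hy.2).elim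
  have := setIntegral_union hdisj measurableSet_Ioi
    ((gmv_int hx).mono_set (fun y hy => hy.1))
    ((gmv_int hx).mono_set (fun y (hy : y ∈ Ioi (2*μ)) => lt_trans (by linarith : (0:ℝ) < 2*μ) hy))
  rw [hsplit] at this
  rw [gmv_integral hx] at this
  rw [gmF_Ioc (by linarith : (0:ℝ) ≤ 2*μ)]
  linarith

lemma tail_gt (hx : 0 < x) (hμ : 0 < μ) :
    μ * ∫ y in Ioi (2*μ), gmv x y < ∫ y in Ioi (2*μ), (y - μ) * gmv x y := by
  have hsub : Ioi (2*μ) ⊆ Ioi (0:ℝ) := fun y hy => lt_trans (by linarith : (0:ℝ) < 2*μ) hy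
  have hi1 : IntegrableOn (fun y => (y - μ) * gmv x y) (Ioi (2*μ)) :=
    (lin_int hx hμ).mono_set hsub
  have hi2 : IntegrableOn (fun y => (y - 2*μ) * gmv x y) (Ioi (2*μ)) :=
    (lin_int hx hμ).mono_set hsub
  have hiv : IntegrableOn (gmv x) (Ioi (2*μ)) := (gmv_int hx).mono_set hsub
  have hpos : 0 < ∫ y in Ioi (2*μ), (y - 2*μ) * gmv x y := by
    rw [setIntegral_pos_iff_support_of_nonneg_ae _ hi2]
    · have : Ioi (2*μ) ⊆ Function.support (fun y => (y - 2*μ) * gmv x y) ∩ Ioi (2*μ) := by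
        intro y hy
        refine ⟨?_, hy⟩
        simp only [Function.mem_support]
        have : 0 < (y - 2*μ) * gmv x y :=
          mul_pos (by simp only [mem_Ioi] at hy; linarith) (gmv_pos (by simp only [mem_Ioi] at hy; linarith))
        exact ne_of_gt this
      refine lt_of_lt_of_le ?_ (measure_mono this)
      rw [Real.volume_Ioi]
      exact ENNReal.zero_lt_top
    · filter_upwards [ae_restrict_mem measurableSet_Ioi] with y hy
      exact mul_nonneg (by simp only [mem_Ioi] at hy; linarith)
        (gmv_nonneg (by simp only [mem_Ioi] at hy; linarith))
  have heq : ∫ y in Ioi (2*μ), (y - μ) * gmv x y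
      = (∫ y in Ioi (2*μ), (y - 2*μ) * gmv x y) + μ * ∫ y in Ioi (2*μ), gmv x y := by
    rw [← integral_const_mul, ← integral_add hi2 (hiv.const_mul μ)]
    congr 1; ext y; ring
  rw [heq]
  linarith

lemma S_eq (hx : 0 < x) (hμ : 0 < μ) :
    ∫ y in Ioi (0:ℝ), (y - μ) * gmv x y = Real.Gamma (x + 1/3) - μ * Real.Gamma x := by
  have h := integral_sub (gmv_moment_int hx) ((gmv_int hx).const_mul μ)
  rw [gmv_moment_integral hx, integral_const_mul, gmv_integral hx] at h
  rw [← h]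
  congr 1; ext y; ring

/-- **Main inequality of the probabilistic part**: `μ Γ(x) < Γ(x+1/3)`. -/
lemma mu_gamma_lt (hx : 0 < x) (hμ : 0 < μ) (hmed : gmF x μ = Real.Gamma x / 2) :
    μ * Real.Gamma x < Real.Gamma (x + 1/3) := by
  have hsplit : Ioc (0:ℝ) (2*μ) ∪ Ioi (2*μ) = Ioi 0 := Ioc_union_Ioi_eq_Ioi (by linarith)
  have hdisj : Disjoint (Ioc (0:ℝ) (2*μ)) (Ioi (2*μ)) := by
    rw [Set.disjoint_left]
    intro y hy hy'
    exact absurd hy' (not_lt.mpr hy.2).elim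
  have hsum := setIntegral_union hdisj measurableSet_Ioi
    ((lin_int hx hμ (c := μ)).mono_set (fun y hy => hy.1))
    ((lin_int hx hμ (c := μ)).mono_set (fun y (hy : y ∈ Ioi (2*μ)) => lt_trans (by linarith : (0:ℝ) < 2*μ) hy))
  rw [hsplit, S_eq hx hμ] at hsum
  -- Ioc piece
  have hIoc : ∫ y in Ioc (0:ℝ) (2*μ), (y - μ) * gmv x y
      = ∫ y in (0:ℝ)..(2*μ), (y - μ) * gmv x y :=
    (intervalIntegral.integral_of_le (by linarith)).symm
  have hphiμ : gmphi x μ μ = gmF x (2*μ) := by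
    unfold gmphi
    rw [sub_self, gmF_zero, add_zero]
    congr 1; ring
  have hIocbd : μ * gmF x (2*μ) - μ * Real.Gamma x ≤ ∫ y in Ioc (0:ℝ) (2*μ), (y - μ) * gmv x y := by
    rw [hIoc, ← pairing hx hμ]
    have := ibp_bound_limit hx hμ hmed
    rw [hphiμ] at this
    exact this
  have htail := tail_gt hx hμ
  rw [tail_v_eq hx hμ] at htail
  have : 0 < Real.Gamma (x + 1/3) - μ * Real.Gamma x := by linarith
  linarith

end stage4c

/-- quadratic lower bound for log. -/
lemma log_quad_lower {w : ℝ} (hw : 0 ≤ w) : w - w^2/2 ≤ Real.log (1+w) := by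
  rcases eq_or_lt_of_le hw with h | h
  · simp [← h]
  have key : ∀ t ∈ Icc (0:ℝ) w, HasDerivAt (fun u => Real.log (1+u) - u + u^2/2)
      ((1+t)⁻¹ - 1 + t) t := by
    intro t ht
    have h1 : HasDerivAt (fun u : ℝ => 1 + u) 1 t := by
      simpa using (hasDerivAt_id t).const_add 1
    have hl : HasDerivAt (fun u : ℝ => Real.log (1+u)) ((1+t)⁻¹) t := by
      have := h1.log (by linarith [ht.1] : (1:ℝ) + t ≠ 0)
      simpa using this
    have hq : HasDerivAt (fun u : ℝ => u^2/2) t t := by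
      have := ((hasDerivAt_id t).pow 2).div_const 2
      simpa using this
    exact (hl.sub (hasDerivAt_id t)).add hq
  have hmono : MonotoneOn (fun u => Real.log (1+u) - u + u^2/2) (Icc 0 w) := by
    apply monotoneOn_of_deriv_nonneg (convex_Icc 0 w)
    · intro t ht
      exact (key t ht).continuousAt.continuousWithinAt
    · intro t ht
      rw [interior_Icc] at ht
      exact (key t ⟨ht.1.le, ht.2.le⟩).differentiableAt.differentiableWithinAt
    · intro t ht
      rw [interior_Icc] at ht
      rw [(key t ⟨ht.1.le, ht.2.le⟩).deriv]
      have h1t : (0:ℝ) < 1 + t := by linarith [ht.1]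
      have he : (1+t)⁻¹ - 1 + t = t^2/(1+t) := by field_simp; ring
      rw [he]
      positivity
  have h0 := hmono (⟨le_refl (0:ℝ), hw⟩ : (0:ℝ) ∈ Icc (0:ℝ) w) ⟨hw, le_refl w⟩ hw
  simp only [add_zero, Real.log_one, sub_zero, zero_pow, ne_eq, OfNat.ofNat_ne_zero,
    not_false_eq_true, zero_div] at h0
  nlinarith [h0]

/-- quadratic upper bound for exp(-u). -/
lemma exp_quad_upper {u : ℝ} (hu : 0 < u) : Real.exp (-u) < 1 - u + u^2/2 := by
  have hd : ∀ t : ℝ, HasDerivAt (fun s : ℝ => 1 - s + s^2/2 - Real.exp (-s))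
      (-1 + t + Real.exp (-t)) t := by
    intro t
    have h1 : HasDerivAt (fun s : ℝ => Real.exp (-s)) (-Real.exp (-t)) t := by
      have := (hasDerivAt_id t).neg.exp
      simpa using this
    have h2 : HasDerivAt (fun s : ℝ => 1 - s + s^2/2) (-1 + t) t := by
      have hq : HasDerivAt (fun s : ℝ => s^2/2) t t := by
        have := ((hasDerivAt_id t).pow 2).div_const 2
        simpa using this
      exact ((hasDerivAt_id t).const_sub 1).add hq
    have := h2.sub h1
    exact this.congr_deriv (by ring)
  have hstrict : StrictMonoOn (fun s : ℝ => 1 - s + s^2/2 - Real.exp (-s)) (Icc 0 u) := by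
    apply strictMonoOn_of_deriv_pos (convex_Icc 0 u)
    · exact fun t _ => (hd t).continuousAt.continuousWithinAt
    · intro t ht
      rw [interior_Icc] at ht
      rw [(hd t).deriv]
      have : 1 - t < Real.exp (-t) := by
        have := Real.add_one_lt_exp (x := -t) (by linarith [ht.1])
        linarith
      linarith
  have h0 := hstrict ⟨le_refl (0:ℝ), hu.le⟩ ⟨hu.le, le_refl u⟩ hu
  simp only [sub_zero, zero_pow, ne_eq, OfNat.ofNat_ne_zero, not_false_eq_true, zero_div,
    neg_zero, Real.exp_zero, add_zero] at h0
  nlinarith [h0]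

/-- the step inequality for the telescoping argument. -/
lemma gm_step {z : ℝ} (hz : 1 ≤ z) :
    1/(9*z*(z+1)) ≤ Real.log (z+1/3) - (2/3)*Real.log z - (1/3)*Real.log (z+1) := by
  have hz0 : (0:ℝ) < z := by linarith
  have hz1 : (0:ℝ) < z + 1 := by linarith
  have hz3 : (0:ℝ) < z + 1/3 := by linarith
  set w : ℝ := (9*z+1)/(27*z^2*(z+1)) with hw
  have hwpos : 0 < w := by positivity
  have hkey : (z+1/3)^3 = z^2*(z+1)*(1+w) := by
    rw [hw]
    field_simp
    ring
  have hlog3 : 3*(Real.log (z+1/3) - (2/3)*Real.log z - (1/3)*Real.log (z+1))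
      = Real.log (1+w) := by
    have h1 : Real.log ((z+1/3)^3) = 3*Real.log (z+1/3) := by
      rw [Real.log_pow]; push_cast; ring
    have h2 : Real.log ((z+1/3)^3) = Real.log (z^2*(z+1)) + Real.log (1+w) := by
      rw [hkey, Real.log_mul (by positivity) (by positivity)]
    have h3 : Real.log (z^2*(z+1)) = 2*Real.log z + Real.log (z+1) := by
      rw [Real.log_mul (by positivity) (by positivity), Real.log_pow]
      push_cast; ring
    nlinarith [h1, h2, h3]
  have hlb := log_quad_lower hwpos.le
  have hpoly : 3*(1/(9*z*(z+1))) ≤ w - w^2/2 := by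
    have hident : w - w^2/2 - 3*(1/(9*z*(z+1)))
        = (54*z^3 - 27*z^2 - 18*z - 1)/(1458*z^4*(z+1)^2) := by
      rw [hw]
      field_simp
      ring
    have hnum : (0:ℝ) ≤ 54*z^3 - 27*z^2 - 18*z - 1 := by nlinarith
    have := div_nonneg hnum (by positivity : (0:ℝ) ≤ 1458*z^4*(z+1)^2)
    linarith [hident ▸ this]
  linarith [hlb, hlog3, hpoly]

noncomputable def gmG (z : ℝ) : ℝ :=
  Real.log (Real.Gamma (z+1/3)) - Real.log (Real.Gamma z) - (1/3)*Real.log z + 1/(9*z)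

lemma gmG_step {z : ℝ} (hz : 1 ≤ z) : gmG z ≤ gmG (z+1) := by
  have hz0 : (0:ℝ) < z := by linarith
  have hz3 : (0:ℝ) < z + 1/3 := by linarith
  have h1 : Real.Gamma (z+1+1/3) = (z+1/3) * Real.Gamma (z+1/3) := by
    rw [show z+1+1/3 = (z+1/3)+1 by ring, Real.Gamma_add_one (ne_of_gt hz3)]
  have h2 : Real.Gamma (z+1) = z * Real.Gamma z := Real.Gamma_add_one (ne_of_gt hz0)
  have hG1 : Real.log (Real.Gamma (z+1+1/3)) = Real.log (z+1/3) + Real.log (Real.Gamma (z+1/3)) := by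
    rw [h1, Real.log_mul (ne_of_gt hz3) (ne_of_gt (Real.Gamma_pos_of_pos hz3))]
  have hG2 : Real.log (Real.Gamma (z+1)) = Real.log z + Real.log (Real.Gamma z) := by
    rw [h2, Real.log_mul (ne_of_gt hz0) (ne_of_gt (Real.Gamma_pos_of_pos hz0))]
  have hstep := gm_step hz
  have hfrac : 1/(9*(z+1)) - 1/(9*z) = -(1/(9*z*(z+1))) := by
    field_simp
    ring
  unfold gmG
  rw [hG1, hG2]
  have : gmG (z+1) - gmG z = Real.log (z+1/3) - (2/3)*Real.log z - (1/3)*Real.log (z+1)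
      - 1/(9*z*(z+1)) := by
    unfold gmG
    rw [hG1, hG2]
    have : (1:ℝ)/(9*(z+1)) - 1/(9*z) = -(1/(9*z*(z+1))) := hfrac
    nlinarith [this]
  nlinarith [hstep, this]

lemma gmG_le_add_nat {z : ℝ} (hz : 1 ≤ z) (n : ℕ) : gmG z ≤ gmG (z+n) := by
  induction n with
  | zero => simp
  | succ k ih =>
    have hst : gmG (z+k) ≤ gmG (z+k+1) := gmG_step (by push_cast; linarith)
    push_cast
    rw [show z + ((k:ℝ)+1) = z + (k:ℝ) + 1 by ring]
    linarith [hst]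

lemma gmG_upper {z : ℝ} (hz : 0 < z) : gmG z ≤ 1/(9*z) := by
  have hcvx := Real.convexOn_log_Gamma.2 (mem_Ioi.mpr hz) (mem_Ioi.mpr (by linarith : (0:ℝ) < z+1))
    (by norm_num : (0:ℝ) ≤ 2/3) (by norm_num : (0:ℝ) ≤ 1/3) (by norm_num)
  simp only [smul_eq_mul, Function.comp_apply] at hcvx
  rw [show (2/3)*z + (1/3)*(z+1) = z + 1/3 by ring] at hcvx
  have h2 : Real.log (Real.Gamma (z+1)) = Real.log z + Real.log (Real.Gamma z) := by
    rw [Real.Gamma_add_one (ne_of_gt hz),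
      Real.log_mul (ne_of_gt hz) (ne_of_gt (Real.Gamma_pos_of_pos hz))]
  unfold gmG
  nlinarith [hcvx, h2]

lemma gmG_lower {z : ℝ} (hz : 0 < z) : -(1/(9*z)) ≤ gmG z := by
  have hz3 : (0:ℝ) < z + 1/3 := by linarith
  have hz43 : (0:ℝ) < z + 4/3 := by linarith
  have hcvx := Real.convexOn_log_Gamma.2 (mem_Ioi.mpr hz3) (mem_Ioi.mpr hz43)
    (by norm_num : (0:ℝ) ≤ 1/3) (by norm_num : (0:ℝ) ≤ 2/3) (by norm_num)
  simp only [smul_eq_mul, Function.comp_apply] at hcvx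
  rw [show (1/3)*(z+1/3) + (2/3)*(z+4/3) = z + 1 by ring] at hcvx
  have h1 : Real.log (Real.Gamma (z+4/3)) = Real.log (z+1/3) + Real.log (Real.Gamma (z+1/3)) := by
    rw [show z+4/3 = (z+1/3)+1 by ring, Real.Gamma_add_one (ne_of_gt hz3),
      Real.log_mul (ne_of_gt hz3) (ne_of_gt (Real.Gamma_pos_of_pos hz3))]
  have h2 : Real.log (Real.Gamma (z+1)) = Real.log z + Real.log (Real.Gamma z) := by
    rw [Real.Gamma_add_one (ne_of_gt hz),
      Real.log_mul (ne_of_gt hz) (ne_of_gt (Real.Gamma_pos_of_pos hz))]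
  -- log(z+1/3) - log z ≤ 1/(3z)
  have hlog : Real.log (z+1/3) - Real.log z ≤ 1/(3*z) := by
    rw [← Real.log_div (ne_of_gt hz3) (ne_of_gt hz)]
    have : (z+1/3)/z = 1 + 1/(3*z) := by field_simp
    rw [this]
    have := Real.log_le_sub_one_of_pos (by positivity : (0:ℝ) < 1 + 1/(3*z))
    linarith
  have hatom : 1/(9*z) = (1/3)*(1/(3*z)) := by ring
  unfold gmG
  nlinarith [hcvx, h1, h2, hlog, hatom]

lemma gmG_nonpos {z : ℝ} (hz : 1 ≤ z) : gmG z ≤ 0 := by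
  have hlim : Filter.Tendsto (fun n : ℕ => gmG (z + n)) Filter.atTop (nhds 0) := by
    have hb : Filter.Tendsto (fun n : ℕ => 1/(9*(z+n))) Filter.atTop (nhds 0) := by
      simp only [one_div]
      apply Filter.Tendsto.comp tendsto_inv_atTop_zero
      apply Filter.tendsto_atTop_mono (f := fun n : ℕ => (n:ℝ))
      · intro n; nlinarith [Nat.cast_nonneg (α := ℝ) n]
      · exact tendsto_natCast_atTop_atTop
    apply squeeze_zero_norm _ hb
    intro n
    have hzn : (0:ℝ) < z + n := by positivity
    rw [Real.norm_eq_abs, abs_le]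
    constructor
    · have := gmG_lower hzn; linarith
    · have := gmG_upper hzn; linarith
  have hmono : ∀ n : ℕ, gmG z ≤ gmG (z + n) := gmG_le_add_nat hz
  exact ge_of_tendsto hlim (Filter.Eventually.of_forall hmono)

/-- **Gamma ratio bound**: for z ≥ 1, Γ(z+1/3) ≤ Γ(z)·z^{1/3}·e^{-1/(9z)}. -/
lemma Gamma_ratio_le {z : ℝ} (hz : 1 ≤ z) :
    Real.Gamma (z+1/3) ≤ Real.Gamma z * z^((1:ℝ)/3) * Real.exp (-(1/(9*z))) := by
  have hz0 : (0:ℝ) < z := by linarith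
  have hz3 : (0:ℝ) < z + 1/3 := by linarith
  have h := gmG_nonpos hz
  unfold gmG at h
  have hlog : Real.log (Real.Gamma (z+1/3)) ≤
      Real.log (Real.Gamma z) + (1/3)*Real.log z + (-(1/(9*z))) := by linarith
  calc Real.Gamma (z+1/3) = Real.exp (Real.log (Real.Gamma (z+1/3))) :=
        (Real.exp_log (Real.Gamma_pos_of_pos hz3)).symm
    _ ≤ Real.exp (Real.log (Real.Gamma z) + (1/3)*Real.log z + (-(1/(9*z)))) :=
        Real.exp_le_exp.mpr hlog
    _ = Real.Gamma z * z^((1:ℝ)/3) * Real.exp (-(1/(9*z))) := by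
        rw [Real.exp_add, Real.exp_add, Real.exp_log (Real.Gamma_pos_of_pos hz0)]
        congr 2
        rw [Real.rpow_def_of_pos hz0]
        ring_nf

/-- final algebraic inequality: `K³ < x - 1/3 + 1/(18x)`. -/
lemma K_cubed_lt {x : ℝ} (hx : 0 < x) :
    (x * (x+1)^((1:ℝ)/3) * Real.exp (-(1/(9*(x+1))))/(x+1/3))^3 < x - 1/3 + 1/(18*x) := by
  have hx1 : (0:ℝ) < x + 1 := by linarith
  have hx3 : (0:ℝ) < x + 1/3 := by linarith
  have hcube1 : ((x+1)^((1:ℝ)/3))^3 = x + 1 := by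
    rw [← Real.rpow_natCast ((x+1)^((1:ℝ)/3)) 3, ← Real.rpow_mul hx1.le]
    norm_num
  have hcube2 : (Real.exp (-(1/(9*(x+1)))))^3 = Real.exp (-(1/(3*(x+1)))) := by
    rw [← Real.exp_nat_mul]
    congr 1
    push_cast
    field_simp
    ring
  have hexpand : (x * (x+1)^((1:ℝ)/3) * Real.exp (-(1/(9*(x+1))))/(x+1/3))^3
      = x^3 * ((x+1) * Real.exp (-(1/(3*(x+1))))) / (x+1/3)^3 := by
    rw [div_pow, mul_pow, mul_pow, hcube1, hcube2]
    ring
  rw [hexpand]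
  have hu : (0:ℝ) < 1/(3*(x+1)) := by positivity
  have hexp := exp_quad_upper hu
  have hfact : (x+1) * (1 - 1/(3*(x+1)) + (1/(3*(x+1)))^2/2) = x + 2/3 + 1/(18*(x+1)) := by
    field_simp
    ring
  have hinner : (x+1) * Real.exp (-(1/(3*(x+1)))) < x + 2/3 + 1/(18*(x+1)) := by
    calc (x+1) * Real.exp (-(1/(3*(x+1))))
        < (x+1)*(1 - 1/(3*(x+1)) + (1/(3*(x+1)))^2/2) := by
          exact mul_lt_mul_of_pos_left hexp hx1
      _ = x + 2/3 + 1/(18*(x+1)) := hfact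
  have hstep1 : x^3 * ((x+1) * Real.exp (-(1/(3*(x+1))))) / (x+1/3)^3
      < x^3 * (x + 2/3 + 1/(18*(x+1))) / (x+1/3)^3 := by
    apply div_lt_div_of_pos_right ?_ (by positivity)
    exact mul_lt_mul_of_pos_left hinner (by positivity)
  have hstep2 : x^3 * (x + 2/3 + 1/(18*(x+1))) / (x+1/3)^3 < x - 1/3 + 1/(18*x) := by
    rw [div_lt_iff₀ (by positivity)]
    have hiden : (x-1/3+1/(18*x))*(x+1/3)^3 - x^3*(x+2/3+1/(18*(x+1)))
        = (18*x^3-6*x^2+4*x+1)/(486*x*(x+1)) := by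
      field_simp
      ring
    have hnum : (0:ℝ) < 18*x^3-6*x^2+4*x+1 := by
      nlinarith [mul_nonneg hx.le (sq_nonneg (6*x-1)), sq_nonneg x, hx]
    have hq : (0:ℝ) < (18*x^3-6*x^2+4*x+1)/(486*x*(x+1)) := by positivity
    linarith [hiden ▸ hq]
  linarith

/-- For every `x > 0` the median of the gamma distribution with
parameter `x` satisfies `m(x) < x − 1/3 + 1/(18x)`. -/
theorem gammaMedian_upper_bound (m : ℝ → ℝ)
    (hm : ∀ x > (0:ℝ), 0 < m x ∧
      (∫ t in Set.Ioc (0:ℝ) (m x), Real.exp (-t) * t ^ (x - 1)) =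
        (1/2) * ∫ t in Set.Ioi (0:ℝ), Real.exp (-t) * t ^ (x - 1)) :
    ∀ x > (0:ℝ), m x < x - 1/3 + 1/(18*x) := by
  intro x hx
  obtain ⟨hM, hmedian⟩ := hm x hx
  have hμ : 0 < (m x) ^ ((1:ℝ)/3) := Real.rpow_pos_of_pos hM _
  set μ := (m x) ^ ((1:ℝ)/3) with hμdef
  have hM3 : μ^3 = m x := by
    rw [hμdef, ← Real.rpow_natCast ((m x) ^ ((1:ℝ)/3)) 3, ← Real.rpow_mul hM.le]
    norm_num
  have hmed' : gmF x μ = Real.Gamma x / 2 := by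
    rw [gmF_Ioc hμ.le, ← Ioc_cube_subst x hμ, hM3]
    have h2 : (∫ t in Set.Ioc (0:ℝ) (m x), gmf x t)
        = (1/2) * ∫ t in Set.Ioi (0:ℝ), gmf x t := hmedian
    rw [h2]
    have h3 : (∫ t in Set.Ioi (0:ℝ), gmf x t) = Real.Gamma x := (Real.Gamma_eq_integral hx).symm
    rw [h3]
    ring
  have hkey := mu_gamma_lt hx hμ hmed'
  have hΓpos := Real.Gamma_pos_of_pos hx
  have hGR := Gamma_ratio_le (show (1:ℝ) ≤ x + 1 by linarith)
  have hx3 : (0:ℝ) < x + 1/3 := by linarith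
  have h13 : Real.Gamma (x+1+1/3) = (x+1/3)*Real.Gamma (x+1/3) := by
    rw [show x+1+1/3 = (x+1/3)+1 by ring, Real.Gamma_add_one (ne_of_gt hx3)]
  have hG1 : Real.Gamma (x+1) = x * Real.Gamma x := Real.Gamma_add_one (ne_of_gt hx)
  set K := x * (x+1)^((1:ℝ)/3) * Real.exp (-(1/(9*(x+1))))/(x+1/3) with hK
  have hKpos : 0 < K := by rw [hK]; positivity
  have hchain : Real.Gamma (x+1/3) ≤ K * Real.Gamma x := by
    have hdiv : Real.Gamma (x+1/3) = Real.Gamma (x+1+1/3)/(x+1/3) := by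
      rw [h13]
      field_simp
    have hKG : K * Real.Gamma x
        = (x * Real.Gamma x * (x+1)^((1:ℝ)/3) * Real.exp (-(1/(9*(x+1)))))/(x+1/3) := by
      rw [hK]; ring
    rw [hdiv, hKG, div_le_div_iff₀ hx3 hx3]
    calc Real.Gamma (x+1+1/3) * (x+1/3)
        ≤ (Real.Gamma (x+1) * (x+1)^((1:ℝ)/3) * Real.exp (-(1/(9*(x+1))))) * (x+1/3) := by
          apply mul_le_mul_of_nonneg_right _ hx3.le
          exact hGR
      _ = x * Real.Gamma x * (x+1)^((1:ℝ)/3) * Real.exp (-(1/(9*(x+1)))) * (x+1/3) := by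
          rw [hG1]; try ring
  have hμK : μ < K := by
    have h2 : μ * Real.Gamma x < K * Real.Gamma x := lt_of_lt_of_le hkey hchain
    exact lt_of_mul_lt_mul_right h2 hΓpos.le
  have hcube : m x < K^3 := by
    rw [← hM3]
    exact pow_lt_pow_left₀ hμK hμ.le (by norm_num)
  have hfinal := K_cubed_lt hx
  rw [← hK] at hfinal
  linarith
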